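/- Let ρ ≥ 2 and m ≥ 1 be natural numbers. Let p', q' : Fin (2·ρ) → ℝ be positive probability vectors and a, b : Fin m → ℝ be positive probability vectors. Define the two-level aggregated vectors p, q : Fin 2 → ℝ by p_r = Σ_{i=0}^{ρ-1} p'_{rρ+i}, q_r = Σ_{i=0}^{ρ-1} q'_{rρ+i}, and joint vectors P'(j,x) = p'_j a_x, Q'(j,x) = q'_j b_x on Fin (2ρ) × Fin m and P(r,x) = p_r a_x, Q(r,x) = q_r b_x on Fin 2 × Fin m. Suppose there exists a block r ∈ {0,1} and indices i, j ∈ {0,...,ρ-1} with p'_{rρ+i} · q'_{rρ+j} ≠ p'_{rρ+j} · q'_{rρ+i}. Then C(P‖Q) < C(P'‖Q'): the Chernoff information of the joint class-conditional distributions with a binary (black-box) quantizer is strictly smaller than with the (2ρ > 2)-level (interpretable) quantizer. -/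

import Mathlib

/-- The index `r*ρ + i` of the `i`-th fine quantizer cell inside the `r`-th coarse
block, as an element of `Fin (k * ρ)`. -/
def blockIdx {k ρ : ℕ} (r : Fin k) (i : Fin ρ) : Fin (k * ρ) :=
  ⟨r.val * ρ + i.val, by
    have h1 : r.val * ρ + i.val < (r.val + 1) * ρ := by
      rw [Nat.succ_mul]; exact Nat.add_lt_add_left i.isLt _
    exact lt_of_lt_of_le h1 (Nat.mul_le_mul_right ρ r.isLt)⟩

/-- The Chernoff information `C(p‖q) = -log (inf_{λ ∈ (0,1)} ∑ i, p i^{1-λ} q i^λ)`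
between two positive probability vectors on a finite index type. -/
noncomputable def chernoffInfo {ι : Type*} [Fintype ι] (p q : ι → ℝ) : ℝ :=
  -Real.log (sInf ((fun l : ℝ => ∑ i, p i ^ (1 - l) * q i ^ l) '' Set.Ioo (0 : ℝ) 1))


open Real Finset

private lemma amgm2_strict {x y w : ℝ} (hx : 0 < x) (hy : 0 < y) (hxy : x ≠ y)
    (hw0 : 0 < w) (hw1 : w < 1) :
    x ^ (1 - w) * y ^ w < (1 - w) * x + w * y := by
  have hlog := strictConcaveOn_log_Ioi.2 (Set.mem_Ioi.mpr hx) (Set.mem_Ioi.mpr hy) hxy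
    (by linarith : (0:ℝ) < 1 - w) hw0 (by ring)
  have hlog' : (1 - w) * Real.log x + w * Real.log y
      < Real.log ((1 - w) * x + w * y) := by simpa [smul_eq_mul] using hlog
  have hpos : 0 < (1 - w) * x + w * y :=
    add_pos (mul_pos (by linarith) hx) (mul_pos hw0 hy)
  calc x ^ (1 - w) * y ^ w
      = Real.exp (Real.log x * (1 - w) + Real.log y * w) := by
        rw [Real.exp_add, Real.rpow_def_of_pos hx, Real.rpow_def_of_pos hy]
    _ < Real.exp (Real.log ((1 - w) * x + w * y)) := Real.exp_lt_exp.2 (by linarith)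
    _ = (1 - w) * x + w * y := Real.exp_log hpos

private lemma sum_geom_mean_le {ι : Type*} [Fintype ι] [Nonempty ι]
    {u v : ι → ℝ} (hu : ∀ i, 0 < u i) (hv : ∀ i, 0 < v i)
    {w : ℝ} (hw0 : 0 < w) (hw1 : w < 1) :
    ∑ i, u i ^ (1 - w) * v i ^ w ≤ (∑ i, u i) ^ (1 - w) * (∑ i, v i) ^ w := by
  have hsu : 0 < ∑ i, u i := Finset.sum_pos (fun i _ => hu i) univ_nonempty
  have hsv : 0 < ∑ i, v i := Finset.sum_pos (fun i _ => hv i) univ_nonempty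
  have hC : 0 < (∑ i, u i) ^ (1 - w) * (∑ i, v i) ^ w := by positivity
  have hid : ∀ i, u i ^ (1 - w) * v i ^ w
      = ((∑ i, u i) ^ (1 - w) * (∑ i, v i) ^ w) *
        ((u i / ∑ i, u i) ^ (1 - w) * (v i / ∑ i, v i) ^ w) := by
    intro i
    rw [Real.div_rpow (hu i).le hsu.le, Real.div_rpow (hv i).le hsv.le]
    have h1 : (∑ i, u i) ^ (1 - w) ≠ 0 := (Real.rpow_pos_of_pos hsu _).ne'
    have h2 : (∑ i, v i) ^ w ≠ 0 := (Real.rpow_pos_of_pos hsv _).ne'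
    field_simp
  have hbound : ∀ i, u i ^ (1 - w) * v i ^ w
      ≤ ((∑ i, u i) ^ (1 - w) * (∑ i, v i) ^ w) *
        ((1 - w) * (u i / ∑ i, u i) + w * (v i / ∑ i, v i)) := by
    intro i
    rw [hid i]
    exact mul_le_mul_of_nonneg_left
      (Real.geom_mean_le_arith_mean2_weighted (by linarith) hw0.le
        (div_pos (hu i) hsu).le (div_pos (hv i) hsv).le (by ring)) hC.le
  calc ∑ i, u i ^ (1 - w) * v i ^ w
      ≤ ∑ i, ((∑ i, u i) ^ (1 - w) * (∑ i, v i) ^ w) *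
          ((1 - w) * (u i / ∑ i, u i) + w * (v i / ∑ i, v i)) :=
        Finset.sum_le_sum fun i _ => hbound i
    _ = (∑ i, u i) ^ (1 - w) * (∑ i, v i) ^ w := by
        rw [← Finset.mul_sum]
        have : ∑ i, ((1 - w) * (u i / ∑ i, u i) + w * (v i / ∑ i, v i)) = 1 := by
          rw [Finset.sum_add_distrib, ← Finset.mul_sum, ← Finset.mul_sum,
            ← Finset.sum_div, ← Finset.sum_div]
          field_simp
          ring
        rw [this, mul_one]

private lemma sum_geom_mean_lt {ι : Type*} [Fintype ι] [Nonempty ι]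
    {u v : ι → ℝ} (hu : ∀ i, 0 < u i) (hv : ∀ i, 0 < v i)
    (hne : ∃ i j, u i * v j ≠ u j * v i)
    {w : ℝ} (hw0 : 0 < w) (hw1 : w < 1) :
    ∑ i, u i ^ (1 - w) * v i ^ w < (∑ i, u i) ^ (1 - w) * (∑ i, v i) ^ w := by
  have hsu : 0 < ∑ i, u i := Finset.sum_pos (fun i _ => hu i) univ_nonempty
  have hsv : 0 < ∑ i, v i := Finset.sum_pos (fun i _ => hv i) univ_nonempty
  have hC : 0 < (∑ i, u i) ^ (1 - w) * (∑ i, v i) ^ w := by positivity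
  have hid : ∀ i, u i ^ (1 - w) * v i ^ w
      = ((∑ i, u i) ^ (1 - w) * (∑ i, v i) ^ w) *
        ((u i / ∑ i, u i) ^ (1 - w) * (v i / ∑ i, v i) ^ w) := by
    intro i
    rw [Real.div_rpow (hu i).le hsu.le, Real.div_rpow (hv i).le hsv.le]
    have h1 : (∑ i, u i) ^ (1 - w) ≠ 0 := (Real.rpow_pos_of_pos hsu _).ne'
    have h2 : (∑ i, v i) ^ w ≠ 0 := (Real.rpow_pos_of_pos hsv _).ne'
    field_simp
  have hbound : ∀ i, u i ^ (1 - w) * v i ^ w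
      ≤ ((∑ i, u i) ^ (1 - w) * (∑ i, v i) ^ w) *
        ((1 - w) * (u i / ∑ i, u i) + w * (v i / ∑ i, v i)) := by
    intro i
    rw [hid i]
    exact mul_le_mul_of_nonneg_left
      (Real.geom_mean_le_arith_mean2_weighted (by linarith) hw0.le
        (div_pos (hu i) hsu).le (div_pos (hv i) hsv).le (by ring)) hC.le
  -- there is an index with distinct normalized values
  have hex : ∃ i, u i / (∑ i, u i) ≠ v i / (∑ i, v i) := by
    by_contra h
    push_neg at h
    obtain ⟨i, j, hij⟩ := hne
    have e : ∀ k, u k * (∑ i, v i) = v k * (∑ i, u i) := fun k =>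
      (div_eq_div_iff hsu.ne' hsv.ne').1 (h k)
    apply hij
    have h2 : (u i * v j) * ((∑ i, v i) * (∑ i, u i))
        = (u j * v i) * ((∑ i, v i) * (∑ i, u i)) := by
      calc (u i * v j) * ((∑ i, v i) * (∑ i, u i))
          = (u i * (∑ i, v i)) * (v j * (∑ i, u i)) := by ring
        _ = (v i * (∑ i, u i)) * (u j * (∑ i, v i)) := by rw [e i, e j]
        _ = (u j * v i) * ((∑ i, v i) * (∑ i, u i)) := by ring
    exact mul_right_cancel₀ (by positivity) h2
  obtain ⟨i₀, hi₀⟩ := hex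
  have hstrict : u i₀ ^ (1 - w) * v i₀ ^ w
      < ((∑ i, u i) ^ (1 - w) * (∑ i, v i) ^ w) *
        ((1 - w) * (u i₀ / ∑ i, u i) + w * (v i₀ / ∑ i, v i)) := by
    rw [hid i₀]
    exact mul_lt_mul_of_pos_left
      (amgm2_strict (div_pos (hu i₀) hsu) (div_pos (hv i₀) hsv) hi₀ hw0 hw1) hC
  calc ∑ i, u i ^ (1 - w) * v i ^ w
      < ∑ i, ((∑ i, u i) ^ (1 - w) * (∑ i, v i) ^ w) *
          ((1 - w) * (u i / ∑ i, u i) + w * (v i / ∑ i, v i)) :=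
        Finset.sum_lt_sum (fun i _ => hbound i) ⟨i₀, Finset.mem_univ _, hstrict⟩
    _ = (∑ i, u i) ^ (1 - w) * (∑ i, v i) ^ w := by
        rw [← Finset.mul_sum]
        have : ∑ i, ((1 - w) * (u i / ∑ i, u i) + w * (v i / ∑ i, v i)) = 1 := by
          rw [Finset.sum_add_distrib, ← Finset.mul_sum, ← Finset.mul_sum,
            ← Finset.sum_div, ← Finset.sum_div]
          field_simp
          ring
        rw [this, mul_one]

private lemma sum_block {k ρ : ℕ} (g : Fin (k * ρ) → ℝ) :
    ∑ j, g j = ∑ r : Fin k, ∑ i : Fin ρ, g (blockIdx r i) := by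
  calc ∑ j, g j = ∑ z : Fin k × Fin ρ, g (blockIdx z.1 z.2) :=
        (Fintype.sum_equiv finProdFinEquiv (fun z => g (blockIdx z.1 z.2)) g
          (fun z => by
            show g (blockIdx z.1 z.2) = g (finProdFinEquiv z)
            congr 1
            apply Fin.ext
            simp [blockIdx]
            ring)).symm
    _ = ∑ r : Fin k, ∑ i : Fin ρ, g (blockIdx r i) := by
        rw [Fintype.sum_prod_type]


/-- Black box versus interpretable classifier: with the human's conditionally
independent observation (class-conditional distributions `a, b`), if some merged
block is non-proportional, the Chernoff information of the joint class-conditional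
distributions with a binary (2-level, black-box) quantizer is strictly smaller
than with the `2ρ > 2`-level (interpretable) quantizer: `C(P‖Q) < C(P'‖Q')`. -/
theorem blackbox_vs_interpretable_chernoffInfo_lt
    (ρ m : ℕ) (hρ : 2 ≤ ρ) (hm : 1 ≤ m)
    (p' q' : Fin (2 * ρ) → ℝ)
    (hp' : ∀ j, 0 < p' j) (hq' : ∀ j, 0 < q' j)
    (hp'sum : ∑ j, p' j = 1) (hq'sum : ∑ j, q' j = 1)
    (a b : Fin m → ℝ)
    (ha : ∀ x, 0 < a x) (hb : ∀ x, 0 < b x)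
    (hasum : ∑ x, a x = 1) (hbsum : ∑ x, b x = 1)
    (p q : Fin 2 → ℝ)
    (hp : ∀ r, p r = ∑ i : Fin ρ, p' (blockIdx r i))
    (hq : ∀ r, q r = ∑ i : Fin ρ, q' (blockIdx r i))
    (P' Q' : Fin (2 * ρ) × Fin m → ℝ)
    (hP' : ∀ z, P' z = p' z.1 * a z.2) (hQ' : ∀ z, Q' z = q' z.1 * b z.2)
    (P Q : Fin 2 × Fin m → ℝ)
    (hP : ∀ z, P z = p z.1 * a z.2) (hQ : ∀ z, Q z = q z.1 * b z.2)
    (hlearn : ∃ (r : Fin 2) (i j : Fin ρ),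
        p' (blockIdx r i) * q' (blockIdx r j) ≠ p' (blockIdx r j) * q' (blockIdx r i)) :
    chernoffInfo P Q < chernoffInfo P' Q' := by
  obtain ⟨r₀, i₀, j₀, hne⟩ := hlearn
  haveI : NeZero m := ⟨by omega⟩
  haveI : NeZero ρ := ⟨by omega⟩
  haveI : NeZero (2 * ρ) := ⟨by omega⟩
  have hppos : ∀ r, 0 < p r := fun r => by
    rw [hp r]; exact Finset.sum_pos (fun i _ => hp' _) univ_nonempty
  have hqpos : ∀ r, 0 < q r := fun r => by
    rw [hq r]; exact Finset.sum_pos (fun i _ => hq' _) univ_nonempty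
  have hPpos : ∀ z, 0 < P z := fun z => by rw [hP z]; exact mul_pos (hppos z.1) (ha z.2)
  have hQpos : ∀ z, 0 < Q z := fun z => by rw [hQ z]; exact mul_pos (hqpos z.1) (hb z.2)
  have hP'pos : ∀ z, 0 < P' z := fun z => by rw [hP' z]; exact mul_pos (hp' z.1) (ha z.2)
  have hQ'pos : ∀ z, 0 < Q' z := fun z => by rw [hQ' z]; exact mul_pos (hq' z.1) (hb z.2)
  have hpsum : ∑ r, p r = 1 := by
    rw [← hp'sum, sum_block p']
    exact Finset.sum_congr rfl fun r _ => hp r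
  have hqsum : ∑ r, q r = 1 := by
    rw [← hq'sum, sum_block q']
    exact Finset.sum_congr rfl fun r _ => hq r
  have hPsum : ∑ z : Fin 2 × Fin m, P z = 1 := by
    rw [Fintype.sum_prod_type]
    calc ∑ r : Fin 2, ∑ x, P (r, x) = ∑ r : Fin 2, p r * ∑ x, a x :=
          Finset.sum_congr rfl fun r _ => by
            rw [Finset.mul_sum]; exact Finset.sum_congr rfl fun x _ => hP (r, x)
      _ = 1 := by rw [hasum]; simpa using hpsum
  have hQsum : ∑ z : Fin 2 × Fin m, Q z = 1 := by
    rw [Fintype.sum_prod_type]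
    calc ∑ r : Fin 2, ∑ x, Q (r, x) = ∑ r : Fin 2, q r * ∑ x, b x :=
          Finset.sum_congr rfl fun r _ => by
            rw [Finset.mul_sum]; exact Finset.sum_congr rfl fun x _ => hQ (r, x)
      _ = 1 := by rw [hbsum]; simpa using hqsum
  -- factorizations
  have hfact' : ∀ w : ℝ, ∑ z : Fin (2 * ρ) × Fin m, P' z ^ (1 - w) * Q' z ^ w
      = (∑ j, p' j ^ (1 - w) * q' j ^ w) * (∑ x, a x ^ (1 - w) * b x ^ w) := by
    intro w
    rw [Finset.sum_mul_sum, Fintype.sum_prod_type]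
    refine Finset.sum_congr rfl fun j _ => Finset.sum_congr rfl fun x _ => ?_
    rw [hP' (j, x), hQ' (j, x), Real.mul_rpow (hp' j).le (ha x).le,
      Real.mul_rpow (hq' j).le (hb x).le]
    ring
  have hfact : ∀ w : ℝ, ∑ z : Fin 2 × Fin m, P z ^ (1 - w) * Q z ^ w
      = (∑ r : Fin 2, p r ^ (1 - w) * q r ^ w) * (∑ x, a x ^ (1 - w) * b x ^ w) := by
    intro w
    rw [Finset.sum_mul_sum, Fintype.sum_prod_type]
    refine Finset.sum_congr rfl fun r _ => Finset.sum_congr rfl fun x _ => ?_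
    rw [hP (r, x), hQ (r, x), Real.mul_rpow (hppos r).le (ha x).le,
      Real.mul_rpow (hqpos r).le (hb x).le]
    ring
  -- pointwise strict inequality
  have hlt : ∀ w : ℝ, 0 < w → w < 1 →
      (∑ z : Fin (2 * ρ) × Fin m, P' z ^ (1 - w) * Q' z ^ w)
        < ∑ z : Fin 2 × Fin m, P z ^ (1 - w) * Q z ^ w := by
    intro w hw0 hw1
    rw [hfact' w, hfact w]
    have ht : 0 < ∑ x, a x ^ (1 - w) * b x ^ w :=
      Finset.sum_pos (fun x _ => mul_pos (Real.rpow_pos_of_pos (ha x) _)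
        (Real.rpow_pos_of_pos (hb x) _)) univ_nonempty
    have hss : (∑ j, p' j ^ (1 - w) * q' j ^ w)
        < ∑ r : Fin 2, p r ^ (1 - w) * q r ^ w := by
      rw [sum_block (fun j => p' j ^ (1 - w) * q' j ^ w)]
      refine Finset.sum_lt_sum (fun r _ => ?_) ⟨r₀, Finset.mem_univ _, ?_⟩
      · have h := sum_geom_mean_le (u := fun i : Fin ρ => p' (blockIdx r i))
          (v := fun i => q' (blockIdx r i)) (fun i => hp' _) (fun i => hq' _) hw0 hw1
        rwa [← hp r, ← hq r] at h
      · have h := sum_geom_mean_lt (u := fun i : Fin ρ => p' (blockIdx r₀ i))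
          (v := fun i => q' (blockIdx r₀ i)) (fun i => hp' _) (fun i => hq' _)
          ⟨i₀, j₀, hne⟩ hw0 hw1
        rwa [← hp r₀, ← hq r₀] at h
    exact mul_lt_mul_of_pos_right hss ht
  -- F ≤ 1 on (0,1)
  have hFle1 : ∀ w : ℝ, 0 < w → w < 1 →
      (∑ z : Fin 2 × Fin m, P z ^ (1 - w) * Q z ^ w) ≤ 1 := by
    intro w hw0 hw1
    have h := sum_geom_mean_le (u := P) (v := Q) hPpos hQpos hw0 hw1
    rwa [hPsum, hQsum, Real.one_rpow, Real.one_rpow, mul_one] at h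
  -- continuity
  have hcont : Continuous fun w : ℝ => ∑ z : Fin 2 × Fin m, P z ^ (1 - w) * Q z ^ w := by
    apply continuous_finset_sum
    intro z _
    have hz : (fun w : ℝ => P z ^ (1 - w) * Q z ^ w)
        = fun w => Real.exp (Real.log (P z) * (1 - w)) * Real.exp (Real.log (Q z) * w) :=
      funext fun w => by rw [Real.rpow_def_of_pos (hPpos z), Real.rpow_def_of_pos (hQpos z)]
    rw [hz]
    exact (Real.continuous_exp.comp
        (continuous_const.mul (continuous_const.sub continuous_id))).mul
      (Real.continuous_exp.comp (continuous_const.mul continuous_id))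
  -- minimum on [0,1]
  obtain ⟨l₀, hl₀mem, hl₀min⟩ := isCompact_Icc.exists_isMinOn
    (Set.nonempty_Icc.mpr zero_le_one) hcont.continuousOn
  have hmin := isMinOn_iff.mp hl₀min
  have hF0 : (∑ z : Fin 2 × Fin m, P z ^ (1 - (0:ℝ)) * Q z ^ (0:ℝ)) = 1 := by
    simp only [sub_zero, Real.rpow_one, Real.rpow_zero, mul_one]; exact hPsum
  have hF1 : (∑ z : Fin 2 × Fin m, P z ^ (1 - (1:ℝ)) * Q z ^ (1:ℝ)) = 1 := by
    simp only [sub_self, Real.rpow_zero, Real.rpow_one, one_mul]; exact hQsum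
  obtain ⟨ls, hls, hlsmin⟩ : ∃ ls ∈ Set.Ioo (0:ℝ) 1, ∀ w ∈ Set.Ioo (0:ℝ) 1,
      (∑ z : Fin 2 × Fin m, P z ^ (1 - ls) * Q z ^ ls)
        ≤ ∑ z : Fin 2 × Fin m, P z ^ (1 - w) * Q z ^ w := by
    by_cases hc : l₀ ∈ Set.Ioo (0:ℝ) 1
    · exact ⟨l₀, hc, fun w hw => hmin w (Set.Ioo_subset_Icc_self hw)⟩
    · have hend : (∑ z : Fin 2 × Fin m, P z ^ (1 - l₀) * Q z ^ l₀) = 1 := by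
        have hcases : l₀ = 0 ∨ l₀ = 1 := by
          rcases hl₀mem with ⟨h0, h1⟩
          rcases eq_or_lt_of_le h0 with h | h
          · exact Or.inl h.symm
          · rcases eq_or_lt_of_le h1 with h' | h'
            · exact Or.inr h'
            · exact absurd ⟨h, h'⟩ hc
        rcases hcases with h | h
        · rw [h]; exact hF0
        · rw [h]; exact hF1
      refine ⟨1/2, ⟨by norm_num, by norm_num⟩, fun w hw => ?_⟩
      calc (∑ z : Fin 2 × Fin m, P z ^ (1 - (1/2:ℝ)) * Q z ^ (1/2:ℝ)) ≤ 1 :=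
            hFle1 _ (by norm_num) (by norm_num)
        _ = ∑ z : Fin 2 × Fin m, P z ^ (1 - l₀) * Q z ^ l₀ := hend.symm
        _ ≤ _ := hmin w (Set.Ioo_subset_Icc_self hw)
  -- sInf facts
  have hSne : ((fun l : ℝ => ∑ z : Fin 2 × Fin m, P z ^ (1 - l) * Q z ^ l) ''
      Set.Ioo (0:ℝ) 1).Nonempty := ⟨_, ⟨1/2, ⟨by norm_num, by norm_num⟩, rfl⟩⟩
  have hS'ne : ((fun l : ℝ => ∑ z : Fin (2 * ρ) × Fin m, P' z ^ (1 - l) * Q' z ^ l) ''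
      Set.Ioo (0:ℝ) 1).Nonempty := ⟨_, ⟨1/2, ⟨by norm_num, by norm_num⟩, rfl⟩⟩
  have hS'bdd : BddBelow ((fun l : ℝ => ∑ z : Fin (2 * ρ) × Fin m,
      P' z ^ (1 - l) * Q' z ^ l) '' Set.Ioo (0:ℝ) 1) := by
    refine ⟨0, ?_⟩
    rintro y ⟨w, hw, rfl⟩
    exact Finset.sum_nonneg fun z _ => mul_nonneg (Real.rpow_nonneg (hP'pos z).le _)
      (Real.rpow_nonneg (hQ'pos z).le _)
  have hSinf_ge : (∑ z : Fin 2 × Fin m, P z ^ (1 - ls) * Q z ^ ls)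
      ≤ sInf ((fun l : ℝ => ∑ z : Fin 2 × Fin m, P z ^ (1 - l) * Q z ^ l) ''
        Set.Ioo (0:ℝ) 1) := by
    refine le_csInf hSne ?_
    rintro y ⟨w, hw, rfl⟩
    exact hlsmin w hw
  have hS'le : sInf ((fun l : ℝ => ∑ z : Fin (2 * ρ) × Fin m,
        P' z ^ (1 - l) * Q' z ^ l) '' Set.Ioo (0:ℝ) 1)
      ≤ ∑ z : Fin (2 * ρ) × Fin m, P' z ^ (1 - ls) * Q' z ^ ls :=
    csInf_le hS'bdd ⟨ls, hls, rfl⟩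
  have hS'pos : 0 < sInf ((fun l : ℝ => ∑ z : Fin (2 * ρ) × Fin m,
      P' z ^ (1 - l) * Q' z ^ l) '' Set.Ioo (0:ℝ) 1) := by
    have hcpos : 0 < ∑ z : Fin (2 * ρ) × Fin m, min (P' z) (Q' z) :=
      Finset.sum_pos (fun z _ => lt_min (hP'pos z) (hQ'pos z)) univ_nonempty
    refine lt_of_lt_of_le hcpos (le_csInf hS'ne ?_)
    rintro y ⟨w, hw, rfl⟩
    refine Finset.sum_le_sum fun z _ => ?_
    have hm0 : 0 < min (P' z) (Q' z) := lt_min (hP'pos z) (hQ'pos z)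
    calc min (P' z) (Q' z)
        = min (P' z) (Q' z) ^ (1 - w) * min (P' z) (Q' z) ^ w := by
          rw [← Real.rpow_add hm0]; norm_num
      _ ≤ P' z ^ (1 - w) * Q' z ^ w :=
          mul_le_mul (Real.rpow_le_rpow hm0.le (min_le_left _ _) (by linarith [hw.2]))
            (Real.rpow_le_rpow hm0.le (min_le_right _ _) hw.1.le)
            (Real.rpow_nonneg hm0.le _) (Real.rpow_nonneg (hP'pos z).le _)
  have hfinal : sInf ((fun l : ℝ => ∑ z : Fin (2 * ρ) × Fin m,
        P' z ^ (1 - l) * Q' z ^ l) '' Set.Ioo (0:ℝ) 1)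
      < sInf ((fun l : ℝ => ∑ z : Fin 2 × Fin m, P z ^ (1 - l) * Q z ^ l) ''
        Set.Ioo (0:ℝ) 1) :=
    lt_of_le_of_lt hS'le (lt_of_lt_of_le (hlt ls hls.1 hls.2) hSinf_ge)
  unfold chernoffInfo
  exact neg_lt_neg (Real.log_lt_log hS'pos hfinal)
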